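/- If a sequence (c_n) of complex numbers is linearly disjoint from every topological dynamical system of zero topological entropy (i.e. from every pair (X,T) with X a compact metric space and T : X → X continuous of zero topological entropy), then (c_n) is fully oscillating. -/

import Mathlib

open Filter Finset

/-- A sequence `(c n)` of complex numbers is oscillating of order `d`. -/
def OscillatingOfOrder (c : ℕ → ℂ) (d : ℕ) : Prop :=
  ∀ P : Polynomial ℝ, P.natDegree ≤ d →
    Tendsto (fun N : ℕ =>
        (N : ℂ)⁻¹ * ∑ n ∈ Finset.range N,
          c n * Complex.exp (2 * Real.pi * Complex.I * (P.eval (n : ℝ))))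
      atTop (nhds 0)

/-- A sequence is fully oscillating if it is oscillating of every order `d ≥ 1`. -/
def FullyOscillating (c : ℕ → ℂ) : Prop :=
  ∀ d : ℕ, 1 ≤ d → OscillatingOfOrder c d

noncomputable section

namespace OscAux

open Polynomial Dynamics Uniformity UniformSpace SetRel
open scoped ENNReal NNReal

instance : Fact ((0:ℝ) < 1) := ⟨one_pos⟩

abbrev Tor (d : ℕ) := Fin (d+1) → AddCircle (1:ℝ)

/-- unipotent skew product -/
def skew (d : ℕ) : Tor d → Tor d := fun x j =>
  if h : (j:ℕ) = 0 then x j else x j + x ⟨(j:ℕ)-1, by omega⟩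

lemma continuous_skew (d : ℕ) : Continuous (skew d) := by
  apply continuous_pi
  intro j
  unfold skew
  split_ifs with h
  · exact continuous_apply j
  · exact (continuous_apply j).add (continuous_apply _)

lemma skew_iterate_dist (d n : ℕ) (x y : Tor d) (j : Fin (d+1)) :
    dist ((skew d)^[n] x j) ((skew d)^[n] y j) ≤ (n+1:ℝ)^(j:ℕ) * dist x y := by
  induction n generalizing j with
  | zero => simpa using dist_le_pi_dist x y j
  | succ n ih =>
    rw [Function.iterate_succ_apply', Function.iterate_succ_apply']
    have hcast : ((n+1:ℕ):ℝ) + 1 = (n:ℝ) + 2 := by push_cast; ring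
    rw [hcast]
    set a := (skew d)^[n] x with ha
    set b := (skew d)^[n] y with hb
    unfold skew
    rcases eq_or_ne ((j:ℕ)) 0 with h | h
    · simp only [h, dif_pos, pow_zero, one_mul]
      have h2 := ih j
      rw [h, pow_zero, one_mul] at h2
      exact h2
    · simp only [h, dif_neg]
      obtain ⟨k, hk⟩ : ∃ k, (j:ℕ) = k + 1 := Nat.exists_eq_succ_of_ne_zero h
      have hj' : (⟨(j:ℕ)-1, by omega⟩ : Fin (d+1)) = ⟨k, by omega⟩ := by
        apply Fin.ext; simp [hk]
      rw [hj']
      have ih2 : dist (a ⟨k, by omega⟩) (b ⟨k, by omega⟩) ≤ (n+1:ℝ)^k * dist x y := ih _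
      calc dist (a j + a ⟨k, by omega⟩) (b j + b ⟨k, by omega⟩)
          ≤ dist (a j) (b j) + dist (a ⟨k, by omega⟩) (b ⟨k, by omega⟩) := dist_add_add_le _ _ _ _
        _ ≤ (n+1:ℝ)^(j:ℕ) * dist x y + (n+1:ℝ)^k * dist x y := add_le_add (ih j) ih2
        _ ≤ (n+2:ℝ)^(j:ℕ) * dist x y := by
            rw [← add_mul]
            apply mul_le_mul_of_nonneg_right _ dist_nonneg
            rw [hk]
            calc (n+1:ℝ)^(k+1) + (n+1:ℝ)^k = (n+1:ℝ)^k * (n+2) := by ring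
              _ ≤ (n+2:ℝ)^k * (n+2) := by gcongr <;> linarith
              _ = (n+2:ℝ)^(k+1) := (pow_succ _ _).symm

lemma skew_iterate_dist_sup (d n : ℕ) (x y : Tor d) :
    dist ((skew d)^[n] x) ((skew d)^[n] y) ≤ (n+1:ℝ)^d * dist x y := by
  apply dist_pi_le_iff (by positivity) |>.2
  intro j
  calc dist ((skew d)^[n] x j) ((skew d)^[n] y j) ≤ (n+1:ℝ)^(j:ℕ) * dist x y :=
        skew_iterate_dist d n x y j
    _ ≤ (n+1:ℝ)^d * dist x y := by
        apply mul_le_mul_of_nonneg_right _ dist_nonneg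
        apply pow_le_pow_right₀ (by linarith)
        omega


/-- forward difference -/
def fdiff (P : Polynomial ℝ) : Polynomial ℝ := P.comp (X + C 1) - P

lemma fdiff_eval (P : Polynomial ℝ) (t : ℝ) : (fdiff P).eval t = P.eval (t+1) - P.eval t := by
  simp [fdiff, eval_comp]

lemma fdiff_zero : fdiff 0 = 0 := by simp [fdiff]

lemma fdiff_of_natDegree_zero {P : Polynomial ℝ} (h : P.natDegree = 0) : fdiff P = 0 := by
  obtain ⟨a, rfl⟩ := Polynomial.natDegree_eq_zero.1 h
  simp [fdiff]

lemma natDegree_fdiff_lt {P : Polynomial ℝ} (h : P.natDegree ≠ 0) :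
    (fdiff P).natDegree < P.natDegree := by
  have hP : P ≠ 0 := fun h0 => h (by simp [h0])
  have hq : (X + C (1:ℝ)).natDegree = 1 := by
    simpa using natDegree_X_add_C (1:ℝ)
  have hdeg : (P.comp (X + C 1)).natDegree = P.natDegree := by
    rw [natDegree_comp, hq, mul_one]
  have hlc : (P.comp (X + C 1)).leadingCoeff = P.leadingCoeff := by
    rw [leadingCoeff_comp (by omega)]
    have : (X + C (1:ℝ)).leadingCoeff = 1 := (monic_X_add_C (1:ℝ)).leadingCoeff
    rw [this, one_pow, mul_one]
  have hcomp0 : P.comp (X + C 1) ≠ 0 := by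
    intro h0
    rw [h0] at hdeg
    simp at hdeg
    exact h hdeg.symm
  have hdd : (P.comp (X + C 1)).degree = P.degree := by
    rw [degree_eq_natDegree hcomp0, degree_eq_natDegree hP, hdeg]
  have hlt : (fdiff P).degree < P.degree := by
    have h3 := Polynomial.degree_sub_lt hdd hcomp0 hlc
    rw [hdd] at h3
    exact h3
  rcases eq_or_ne (fdiff P) 0 with he | hne
  · rw [he]; simpa using Nat.pos_of_ne_zero h
  · exact natDegree_lt_natDegree hne hlt

lemma natDegree_fdiff_iterate {k : ℕ} {P : Polynomial ℝ} (h : P.natDegree ≤ k) :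
    (fdiff^[k] P).natDegree = 0 := by
  induction k generalizing P with
  | zero =>
    rw [Function.iterate_zero_apply]
    omega
  | succ k ih =>
    rw [Function.iterate_succ_apply]
    rcases eq_or_ne P.natDegree 0 with h0 | h0
    · rw [fdiff_of_natDegree_zero h0]
      have : ∀ m, fdiff^[m] (0 : Polynomial ℝ) = 0 := by
        intro m; induction m with
        | zero => rfl
        | succ m ihm => rw [Function.iterate_succ_apply, fdiff_zero, ihm]
      rw [this k]; simp
    · exact ih (by have := natDegree_fdiff_lt h0; omega)


def initpt (d : ℕ) (P : Polynomial ℝ) : Tor d :=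
  fun j => (((fdiff^[d - (j:ℕ)] P).eval 0 : ℝ) : AddCircle (1:ℝ))

lemma skew_orbit (d : ℕ) (P : Polynomial ℝ) (hP : P.natDegree ≤ d) (n : ℕ) (j : Fin (d+1)) :
    (skew d)^[n] (initpt d P) j
      = (((fdiff^[d - (j:ℕ)] P).eval (n:ℝ) : ℝ) : AddCircle (1:ℝ)) := by
  induction n generalizing j with
  | zero => simp [initpt]
  | succ n ih =>
    rw [Function.iterate_succ_apply']
    set a := (skew d)^[n] (initpt d P) with ha
    have hskew : skew d a j = if h : (j:ℕ)=0 then a j else a j + a ⟨(j:ℕ)-1, by omega⟩ := rfl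
    rw [hskew]
    rcases eq_or_ne ((j:ℕ)) 0 with h | h
    · rw [dif_pos h, ih j, h]
      have h0 : (fdiff^[d - 0] P).natDegree = 0 := natDegree_fdiff_iterate (by omega)
      obtain ⟨a, ha⟩ := Polynomial.natDegree_eq_zero.1 h0
      rw [← ha]
      simp [← ha]
    · rw [dif_neg h]
      obtain ⟨k, hk⟩ : ∃ k, (j:ℕ) = k + 1 := Nat.exists_eq_succ_of_ne_zero h
      have hj' : (⟨(j:ℕ)-1, by omega⟩ : Fin (d+1)) = ⟨k, by omega⟩ := by
        apply Fin.ext; simp [hk]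
      rw [hj', ih j, ih ⟨k, by omega⟩]
      have hsumc : ∀ a b : ℝ, ((a:AddCircle (1:ℝ)) + (b:AddCircle (1:ℝ))) = ((a+b : ℝ) : AddCircle (1:ℝ)) := fun a b => rfl
      rw [hsumc]
      congr 1
      have hdk : d - k = (d - (j:ℕ)) + 1 := by omega
      have : (⟨k, by omega⟩ : Fin (d+1)) = (⟨k, by omega⟩ : Fin (d+1)) := rfl
      show (fdiff^[d - (j:ℕ)] P).eval (n:ℝ) + (fdiff^[d - ((⟨k, by omega⟩ : Fin (d+1)):ℕ)] P).eval (n:ℝ) = _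
      have hcoord : ((⟨k, by omega⟩ : Fin (d+1)) : ℕ) = k := rfl
      rw [hcoord, hdk, Function.iterate_succ_apply', fdiff_eval]
      push_cast
      ring

lemma dist_coe_le (a b : ℝ) : dist (a : AddCircle (1:ℝ)) (b : AddCircle (1:ℝ)) ≤ |a - b| := by
  rw [dist_eq_norm]
  have h : (a : AddCircle (1:ℝ)) - b = ((a - b : ℝ) : AddCircle (1:ℝ)) := rfl
  rw [h]
  simpa using QuotientAddGroup.norm_mk_le_norm (S := AddSubgroup.zmultiples (1:ℝ)) (m := a-b)

lemma grid_dense (m : ℕ) (hm : 0 < m) (a : AddCircle (1:ℝ)) :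
    ∃ i : Fin m, dist a ((((i:ℕ):ℝ)/m : ℝ) : AddCircle (1:ℝ)) ≤ 1/m := by
  obtain ⟨b, hb, rfl⟩ : ∃ b ∈ Set.Ico (0:ℝ) (0+1), (b : AddCircle (1:ℝ)) = a :=
    ⟨(AddCircle.equivIco 1 0 a : ℝ), (AddCircle.equivIco 1 0 a).2,
      (AddCircle.equivIco 1 0).symm_apply_apply a⟩
  rw [zero_add] at hb
  have hm' : (0:ℝ) < m := by exact_mod_cast hm
  have hfl : (⌊b * m⌋₊ : ℝ) ≤ b * m := Nat.floor_le (by nlinarith [hb.1])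
  have hfl2 : b * m < ⌊b * m⌋₊ + 1 := Nat.lt_floor_add_one _
  have hlt : ⌊b * m⌋₊ < m := (Nat.floor_lt (by nlinarith [hb.1])).2 (by nlinarith [hb.2])
  refine ⟨⟨⌊b * m⌋₊, hlt⟩, ?_⟩
  refine (dist_coe_le _ _).trans ?_
  have h1 : (⌊b * m⌋₊ : ℝ)/m ≤ b := by rw [div_le_iff₀ hm']; exact hfl
  have h2 : b ≤ ((⌊b * m⌋₊ : ℝ)+1)/m := by rw [le_div_iff₀ hm']; linarith
  have h3 : ((⌊b * m⌋₊ : ℝ)+1)/m = (⌊b * m⌋₊ : ℝ)/m + 1/m := add_div _ _ _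
  rw [abs_le]
  constructor
  · have : (0:ℝ) ≤ 1/m := by positivity
    simp only [Fin.val_mk]
    linarith
  · simp only [Fin.val_mk]
    linarith

/-- the grid as a finset -/
def grid (d m : ℕ) : Finset (Tor d) :=
  Finset.image (fun g : Fin (d+1) → Fin m =>
    (fun j => ((((g j : ℕ) : ℝ)/m : ℝ) : AddCircle (1:ℝ)) : Tor d)) Finset.univ

lemma grid_card (d m : ℕ) : (grid d m).card ≤ m^(d+1) := by
  refine (Finset.card_image_le).trans ?_
  rw [Finset.card_univ]
  rw [Fintype.card_fun]
  simp

lemma grid_cover (d m n : ℕ) (hm : 0 < m) {ε3 : ℝ} (hε3 : ((n+1:ℝ))^d / m ≤ ε3) :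
    IsDynCoverOf (skew d) Set.univ {p : Tor d × Tor d | dist p.1 p.2 ≤ ε3} n (grid d m) := by
  intro x _
  choose g hg using fun j => grid_dense m hm (x j)
  set y : Tor d := fun j => ((((g j : ℕ) : ℝ)/m : ℝ) : AddCircle (1:ℝ)) with hy
  have hym : y ∈ grid d m := Finset.mem_image.2 ⟨g, Finset.mem_univ g, rfl⟩
  have hdistyx : dist y x ≤ 1/m := by
    refine dist_pi_le_iff (by positivity) |>.2 fun j => ?_
    rw [dist_comm]
    exact hg j
  refine ⟨y, hym, ?_⟩
  rw [mem_dynEntourage]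
  intro k hk
  simp only [Set.mem_setOf_eq]
  rw [dist_comm]
  calc dist ((skew d)^[k] y) ((skew d)^[k] x) ≤ (k+1:ℝ)^d * dist y x :=
        skew_iterate_dist_sup d k y x
    _ ≤ (n+1:ℝ)^d * (1/m) := by
        apply mul_le_mul _ hdistyx dist_nonneg (by positivity)
        apply pow_le_pow_left₀ (by positivity)
        have : (k:ℝ) ≤ n := by exact_mod_cast hk.le
        linarith
    _ ≤ ε3 := by rw [mul_one_div]; exact hε3


lemma ereal_coe_div (x y : ℝ) : ((x/y : ℝ) : EReal) = (x : EReal)/(y : EReal) := by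
  rw [div_eq_mul_inv, div_eq_mul_inv, EReal.coe_mul, EReal.coe_inv]

lemma log_aux_tendsto (B D : ℕ) (hB : 0 < B) :
    Tendsto (fun n : ℕ => ENNReal.log (((B*(n+1)^D)^(D+1) : ℕ) : ℝ≥0∞) / (n : EReal))
      atTop (nhds (0 : EReal)) := by
  have hlog : ∀ n : ℕ, ENNReal.log (((B*(n+1)^D)^(D+1) : ℕ) : ℝ≥0∞)
      = (Real.log (((B*(n+1)^D)^(D+1) : ℕ) : ℝ) : EReal) := by
    intro n
    rw [← ENNReal.ofReal_natCast, ENNReal.log_ofReal_of_pos]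
    positivity
  have hcoe : ∀ n : ℕ, ((n : ℝ) : EReal) = (n : EReal) := fun n => by
    exact_mod_cast rfl
  have hmain : Tendsto (fun n : ℕ => (Real.log (((B*(n+1)^D)^(D+1) : ℕ) : ℝ) / (n:ℝ)))
      atTop (nhds (0:ℝ)) := by
    have hBR : (0:ℝ) < B := by exact_mod_cast hB
    have hrw : ∀ n : ℕ, Real.log (((B*(n+1)^D)^(D+1) : ℕ) : ℝ) / (n:ℝ)
        = ((D+1:ℝ) * Real.log B) * (1/(n:ℝ))
          + ((D+1:ℝ) * D) * (Real.log ((n:ℝ)+1) / (n:ℝ)) := by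
      intro n
      have h1 : (((B*(n+1)^D)^(D+1) : ℕ) : ℝ) = ((B:ℝ)*((n:ℝ)+1)^D)^(D+1) := by push_cast; ring
      rw [h1, Real.log_pow, Real.log_mul (ne_of_gt hBR) (by positivity), Real.log_pow]
      push_cast
      ring
    rw [funext hrw]
    have t1 : Tendsto (fun n : ℕ => Real.log ((n:ℝ)+1)/((n:ℝ)+1)) atTop (nhds 0) := by
      have := Real.isLittleO_log_id_atTop.tendsto_div_nhds_zero
      exact this.comp (tendsto_atTop_add_const_right atTop 1 tendsto_natCast_atTop_atTop)
    have t2 : Tendsto (fun n : ℕ => ((n:ℝ)+1)/(n:ℝ)) atTop (nhds 1) := by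
      have h : Tendsto (fun n : ℕ => 1 + 1/(n:ℝ)) atTop (nhds 1) := by
        simpa using tendsto_const_nhds.add (tendsto_one_div_atTop_nhds_zero_nat (𝕜 := ℝ))
      refine h.congr' ?_
      filter_upwards [eventually_ge_atTop 1] with n hn
      have : (n:ℝ) ≠ 0 := by
        have : (1:ℝ) ≤ n := by exact_mod_cast hn
        linarith
      field_simp
    have t3 : Tendsto (fun n : ℕ => Real.log ((n:ℝ)+1)/(n:ℝ)) atTop (nhds 0) := by
      have := t1.mul t2
      rw [zero_mul] at this
      refine this.congr' ?_
      filter_upwards [eventually_ge_atTop 1] with n hn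
      have hn0 : (n:ℝ) ≠ 0 := by
        have : (1:ℝ) ≤ n := by exact_mod_cast hn
        linarith
      have hn1 : ((n:ℝ)+1) ≠ 0 := by positivity
      field_simp
    have := ((tendsto_one_div_atTop_nhds_zero_nat (𝕜 := ℝ)).const_mul ((D+1:ℝ) * Real.log B)).add
      (t3.const_mul ((D+1:ℝ) * D))
    simpa using this
  have : Tendsto (fun n : ℕ => ((Real.log (((B*(n+1)^D)^(D+1) : ℕ) : ℝ) / (n:ℝ) : ℝ) : EReal))
      atTop (nhds ((0:ℝ) : EReal)) := EReal.tendsto_coe.2 hmain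
  simp only [EReal.coe_zero] at this
  refine this.congr fun n => ?_
  rw [ereal_coe_div, hlog n, hcoe n]

theorem skew_coverEntropy_zero (d : ℕ) : coverEntropy (skew d) (Set.univ : Set (Tor d)) = 0 := by
  refine le_antisymm ?_ (coverEntropy_nonneg (skew d) Set.univ_nonempty)
  refine iSup₂_le fun U hU => ?_
  obtain ⟨ε, hε, hUε⟩ := Metric.mem_uniformity_dist.1 hU
  set V : Set (Tor d × Tor d) := {p | dist p.1 p.2 ≤ ε/3} with hVdef
  have V_symm : SetRel.IsSymm V := ⟨fun a b h => by simpa [V, dist_comm] using h⟩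
  have hVV : V ○ V ⊆ U := by
    rintro ⟨p1, p2⟩ ⟨z, h1, h2⟩
    apply hUε
    simp only [V, Set.mem_setOf_eq] at h1 h2
    calc dist p1 p2 ≤ dist p1 z + dist z p2 := dist_triangle _ _ _
      _ ≤ ε/3 + ε/3 := add_le_add h1 h2
      _ < ε := by linarith
  refine le_trans (coverEntropyEntourage_antitone (skew d) Set.univ hVV) ?_
  set B : ℕ := ⌈3/ε⌉₊ + 1 with hBdef
  have hB : 0 < B := Nat.succ_pos _
  have hkey : ∀ n : ℕ, 0 < n →
      coverEntropyEntourage (skew d) (Set.univ : Set (Tor d)) (V ○ V)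
        ≤ ENNReal.log (((B*(n+1)^d)^(d+1) : ℕ) : ℝ≥0∞) / (n : EReal) := by
    intro n hn
    refine le_trans (coverEntropyEntourage_le_log_coverMincard_div
      (Set.mapsTo_univ _ _) hn.ne') ?_
    refine EReal.monotone_div_right_of_nonneg (Nat.cast_nonneg' n) (ENNReal.log_monotone ?_)
    set m : ℕ := B*(n+1)^d with hmdef
    have hm : 0 < m := by positivity
    have hcov : IsDynCoverOf (skew d) Set.univ V n (grid d m) := by
      rw [hVdef]
      apply grid_cover d m n hm
      have hmR : (0:ℝ) < m := by exact_mod_cast hm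
      have hBR : (3/ε : ℝ) ≤ B := by
        calc (3/ε : ℝ) ≤ ⌈3/ε⌉₊ := Nat.le_ceil _
          _ ≤ B := by exact_mod_cast Nat.le_succ _
      have hBR' : (0:ℝ) < B := by exact_mod_cast hB
      have h1 : (m:ℝ) = (B:ℝ)*((n:ℝ)+1)^d := by
        rw [hmdef, Nat.cast_mul, Nat.cast_pow, Nat.cast_add, Nat.cast_one]
        push_cast
        ring
      have hne : ((n:ℝ)+1)^d ≠ 0 := by positivity
      have h2 : ((n:ℝ)+1)^d / ((B:ℝ)*((n:ℝ)+1)^d) = 1/(B:ℝ) := by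
        rw [mul_comm, ← div_div, div_self hne]
      rw [h1, h2]
      have h3 : (3:ℝ) ≤ ε * (B:ℝ) := by
        have := (div_le_iff₀ hε).1 hBR
        linarith
      rw [div_le_div_iff₀ hBR' (by norm_num : (0:ℝ) < 3)]
      linarith
    have h4 : coverMincard (skew d) Set.univ V n ≤ ((m^(d+1) : ℕ) : ℕ∞) :=
      hcov.coverMincard_le_card.trans (by exact_mod_cast grid_card d m)
    exact_mod_cast h4
  have htend := log_aux_tendsto B d hB
  refine ge_of_tendsto htend ?_
  filter_upwards [eventually_ge_atTop 1] with n hn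
  exact hkey n hn


end OscAux

end

open OscAux in
theorem fullyOscillating_of_disjoint_from_all_zero_entropy_systems (c : ℕ → ℂ)
    (hdisj : ∀ (X : Type) [MetricSpace X] [CompactSpace X],
      ∀ T : X → X, Continuous T →
        Dynamics.coverEntropy T Set.univ = 0 →
        ∀ x : X, ∀ f : X → ℂ, Continuous f →
          Tendsto (fun Nn : ℕ =>
              (Nn : ℂ)⁻¹ * ∑ n ∈ Finset.range Nn, c n * f (T^[n] x))
            atTop (nhds 0)) :
    FullyOscillating c := by
  intro d _ P hP
  have hcont := continuous_skew d
  have hent := skew_coverEntropy_zero d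
  set f : Tor d → ℂ := fun x => ((x (Fin.last d)).toCircle : ℂ) with hfdef
  have hf : Continuous f :=
    continuous_induced_dom.comp (AddCircle.continuous_toCircle.comp (continuous_apply _))
  have key := hdisj (Tor d) (skew d) hcont hent (initpt d P) f hf
  refine key.congr fun N => ?_
  congr 1
  refine Finset.sum_congr rfl fun n _ => ?_
  congr 1
  have horb := skew_orbit d P hP n (Fin.last d)
  have hlast : d - ((Fin.last d : Fin (d+1)) : ℕ) = 0 := by simp
  rw [hfdef]
  simp only []
  rw [hlast] at horb
  rw [horb, Function.iterate_zero_apply, AddCircle.toCircle_apply_mk, Circle.coe_exp]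
  congr 1
  push_cast
  ring
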